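/- For any graph G and any positive integer n, α(G^{⊗n}) ≤ (α*(χ(G)))^n, and consequently the Shannon capacity Θ(G) = lim_n (α(G^{⊗n}))^{1/n} is at most α*(χ(G)). -/

import Mathlib

open Finset

structure FinHypergraph (V : Type*) [Fintype V] where
  edges : Finset (Finset V)

def FinHypergraph.IsPacking {V : Type*} [Fintype V] (H : FinHypergraph V) (v : V → ℝ) : Prop :=
  (∀ x, 0 ≤ v x) ∧ ∀ e ∈ H.edges, ∑ x ∈ e, v x ≤ 1

noncomputable def FinHypergraph.alphaStar {V : Type*} [Fintype V] (H : FinHypergraph V) : ℝ :=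
  sSup {s | ∃ v : V → ℝ, H.IsPacking v ∧ s = ∑ x, v x}

open scoped Classical in
/-- The clique hypergraph of a graph: hyperedges are all cliques. -/
noncomputable def cliqueHypergraph {V : Type*} [Fintype V] (G : SimpleGraph V) :
    FinHypergraph V :=
  ⟨Finset.univ.filter fun s : Finset V => G.IsClique (s : Set V)⟩

/-- The independence number of a finite graph. -/
noncomputable def indepNum {V : Type*} [Fintype V] (G : SimpleGraph V) : ℕ :=
  sSup {n | ∃ s : Finset V, (∀ x ∈ s, ∀ y ∈ s, x ≠ y → ¬ G.Adj x y) ∧ s.card = n}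

/-- The `n`-fold strong product of a graph with itself: vertices are `n`-tuples,
two distinct tuples are adjacent iff in each coordinate the entries are equal or adjacent. -/
def strongPow {V : Type*} (G : SimpleGraph V) (n : ℕ) : SimpleGraph (Fin n → V) where
  Adj a b := a ≠ b ∧ ∀ i, a i = b i ∨ G.Adj (a i) (b i)
  symm := ⟨by
    rintro a b ⟨h1, h2⟩
    exact ⟨h1.symm, fun i => (h2 i).imp Eq.symm (fun h => h.symm)⟩⟩
  loopless := ⟨by intro a h; exact h.1 rfl⟩

namespace ShannonAux

variable {V : Type*} [Fintype V] (G : SimpleGraph V)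

/-- The set of packing values. -/
def packSet (H : FinHypergraph V) : Set ℝ :=
  {s | ∃ v : V → ℝ, H.IsPacking v ∧ s = ∑ x, v x}

lemma alphaStar_eq (H : FinHypergraph V) : H.alphaStar = sSup (packSet H) := rfl

lemma zero_mem_packSet (H : FinHypergraph V) : (0 : ℝ) ∈ packSet H :=
  ⟨fun _ => 0, ⟨fun _ => le_refl _, fun e _ => by simp⟩, by simp⟩

lemma singleton_mem_cliqueHypergraph (x : V) :
    ({x} : Finset V) ∈ (cliqueHypergraph G).edges := by
  classical
  simp only [cliqueHypergraph, Finset.mem_filter, Finset.mem_univ, true_and]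
  simpa using G.isClique_singleton x

lemma packSet_bddAbove : BddAbove (packSet (cliqueHypergraph G)) := by
  refine ⟨(Fintype.card V : ℝ), ?_⟩
  rintro s ⟨v, ⟨hv0, hv1⟩, rfl⟩
  calc ∑ x, v x ≤ ∑ _x : V, (1 : ℝ) := by
        refine Finset.sum_le_sum fun x _ => ?_
        have := hv1 _ (singleton_mem_cliqueHypergraph G x)
        simpa using this
    _ = Fintype.card V := by simp
  
lemma alphaStar_nonneg : 0 ≤ (cliqueHypergraph G).alphaStar :=
  le_csSup (packSet_bddAbove G) (zero_mem_packSet _)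

lemma packing_sum_le {v : V → ℝ} (hv : (cliqueHypergraph G).IsPacking v) :
    ∑ x, v x ≤ (cliqueHypergraph G).alphaStar :=
  le_csSup (packSet_bddAbove G) ⟨v, hv, rfl⟩

lemma one_le_alphaStar [Nonempty V] : 1 ≤ (cliqueHypergraph G).alphaStar := by
  classical
  obtain ⟨x₀⟩ := ‹Nonempty V›
  have : ∑ x, (if x = x₀ then (1:ℝ) else 0) ≤ (cliqueHypergraph G).alphaStar := by
    refine packing_sum_le G ⟨fun x => by positivity, fun e _ => ?_⟩
    rw [Finset.sum_ite_eq' e x₀ (fun _ => (1:ℝ))]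
    split <;> norm_num
  simpa using this

/-- Sum over a piFinset of a cons. -/
lemma sum_piFinset_cons {n : ℕ} (e0 : Finset V) (e : Fin n → Finset V)
    (v : (Fin (n+1) → V) → ℝ) :
    ∑ a ∈ Fintype.piFinset (Fin.cons e0 e), v a
      = ∑ x ∈ e0, ∑ b ∈ Fintype.piFinset e, v (Fin.cons x b) := by
  classical
  rw [← Finset.sum_product']
  refine Finset.sum_nbij' (fun a => (a 0, Fin.tail a)) (fun p => Fin.cons p.1 p.2) ?_ ?_ ?_ ?_ ?_
  · intro a ha
    rw [Fin.mem_piFinset_iff_zero_tail, Fin.cons_zero, Fin.tail_cons] at ha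
    simpa [Finset.mem_product] using ha
  · rintro ⟨x, b⟩ hp
    rw [Finset.mem_product] at hp
    rw [Fin.mem_piFinset_iff_zero_tail]
    simpa [Fin.tail_cons] using hp
  · intro a _; exact Fin.cons_self_tail a
  · rintro ⟨x, b⟩ _; simp [Fin.tail_cons]
  · intro a _; simp [Fin.cons_self_tail]

/-- The key inductive lemma. -/
lemma key (n : ℕ) (v : (Fin n → V) → ℝ) (hv0 : ∀ a, 0 ≤ v a)
    (hv : ∀ e : Fin n → Finset V, (∀ i, e i ∈ (cliqueHypergraph G).edges) →
      ∑ a ∈ Fintype.piFinset e, v a ≤ 1) :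
    ∑ a, v a ≤ (cliqueHypergraph G).alphaStar ^ n := by
  classical
  induction n with
  | zero =>
      have h := hv Fin.elim0 (fun i => i.elim0)
      have hu : Fintype.piFinset (Fin.elim0 : Fin 0 → Finset V) = Finset.univ := by
        refine Finset.eq_univ_iff_forall.2 fun a => ?_
        exact Fintype.mem_piFinset.2 fun i => i.elim0
      rw [hu] at h
      simpa using h
  | succ n ih =>
      rcases isEmpty_or_nonempty V with hV | hV
      · have : IsEmpty (Fin (n+1) → V) := by
          refine ⟨fun a => hV.elim (a 0)⟩
        rw [Finset.univ_eq_empty, Finset.sum_empty]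
        exact pow_nonneg (alphaStar_nonneg G) _
      · set α := (cliqueHypergraph G).alphaStar with hα
        have hα1 : 1 ≤ α := one_le_alphaStar G
        have hαpos : 0 < α := lt_of_lt_of_le one_pos hα1
        set u : (Fin n → V) → ℝ := fun b => ∑ x : V, v (Fin.cons x b) with hu
        have hsum : ∑ a, v a = ∑ b, u b := by
          rw [← Fintype.sum_prod_type']
          exact Fintype.sum_equiv ((Fin.consEquiv (fun _ => V)).symm.trans (Equiv.prodComm _ _))
            _ _ (fun a => by simp [Fin.consEquiv])
        have hbox : ∀ e : Fin n → Finset V, (∀ i, e i ∈ (cliqueHypergraph G).edges) →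
            ∑ b ∈ Fintype.piFinset e, u b ≤ α := by
          intro e he
          have hswap : ∑ b ∈ Fintype.piFinset e, u b
              = ∑ x : V, ∑ b ∈ Fintype.piFinset e, v (Fin.cons x b) := by
            rw [Finset.sum_comm]
          rw [hswap]
          refine packing_sum_le G ⟨fun x => Finset.sum_nonneg fun b _ => hv0 _, ?_⟩
          intro e0 he0
          rw [← sum_piFinset_cons]
          refine hv (Fin.cons e0 e) ?_
          intro i
          refine Fin.cases ?_ ?_ i
          · simpa using he0
          · intro j; simpa using he j
        have hdiv : ∑ b, (fun b => u b / α) b ≤ α ^ n := by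
          refine ih (fun b => u b / α) (fun b => ?_) (fun e he => ?_)
          · exact div_nonneg (Finset.sum_nonneg fun x _ => hv0 _) hαpos.le
          · rw [← Finset.sum_div, div_le_one hαpos]
            exact hbox e he
        rw [hsum]
        have : ∑ b, u b / α ≤ α ^ n := hdiv
        rw [← Finset.sum_div, div_le_iff₀ hαpos] at this
        calc ∑ b, u b ≤ α ^ n * α := this
          _ = α ^ (n+1) := by ring

lemma indep_card_le (n : ℕ) (s : Finset (Fin n → V))
    (hs : ∀ x ∈ s, ∀ y ∈ s, x ≠ y → ¬ (strongPow G n).Adj x y) :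
    (s.card : ℝ) ≤ (cliqueHypergraph G).alphaStar ^ n := by
  classical
  have hpack : ∀ e : Fin n → Finset V, (∀ i, e i ∈ (cliqueHypergraph G).edges) →
      ∑ a ∈ Fintype.piFinset e, (if a ∈ s then (1:ℝ) else 0) ≤ 1 := by
    intro e he
    rw [Finset.sum_ite_mem]
    have hsub : (Fintype.piFinset e ∩ s).card ≤ 1 := by
      refine Finset.card_le_one.2 fun a ha b hb => ?_
      simp only [Finset.mem_inter] at ha hb
      by_contra hne
      refine hs a ha.2 b hb.2 hne ⟨hne, fun i => ?_⟩
      have hei : G.IsClique ((e i : Finset V) : Set V) := by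
        have := he i
        simpa [cliqueHypergraph] using this
      have hai : a i ∈ e i := Fintype.mem_piFinset.1 ha.1 i
      have hbi : b i ∈ e i := Fintype.mem_piFinset.1 hb.1 i
      rcases eq_or_ne (a i) (b i) with h | h
      · exact Or.inl h
      · exact Or.inr (hei (by simpa using hai) (by simpa using hbi) h)
    calc ∑ a ∈ Fintype.piFinset e ∩ s, (1:ℝ) = (Fintype.piFinset e ∩ s).card := by simp
      _ ≤ 1 := by exact_mod_cast hsub
  have hkey := key G n (fun a => if a ∈ s then (1:ℝ) else 0) (fun a => by positivity) hpack
  have hcard : (s.card : ℝ) = ∑ a : Fin n → V, (if a ∈ s then (1:ℝ) else 0) := by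
    rw [Finset.sum_ite_mem, Finset.univ_inter, Finset.sum_const, nsmul_eq_mul, mul_one]
  rw [hcard]
  exact hkey

lemma indepNum_le (n : ℕ) :
    (indepNum (strongPow G n) : ℝ) ≤ (cliqueHypergraph G).alphaStar ^ n := by
  classical
  set S := {m | ∃ s : Finset (Fin n → V),
    (∀ x ∈ s, ∀ y ∈ s, x ≠ y → ¬ (strongPow G n).Adj x y) ∧ s.card = m} with hS
  have hne : S.Nonempty := ⟨0, ∅, by simp, by simp⟩
  have hbdd : BddAbove S := by
    refine ⟨Fintype.card (Fin n → V), ?_⟩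
    rintro m ⟨s, _, rfl⟩
    exact Finset.card_le_univ s
  have hmem : sSup S ∈ S := Nat.sSup_mem hne hbdd
  obtain ⟨s, hs, hcard⟩ := hmem
  have : (indepNum (strongPow G n) : ℝ) = (s.card : ℝ) := by
    rw [hcard]; rfl
  rw [this]
  exact indep_card_le G n s hs

end ShannonAux

theorem indepNum_strongPow_le_and_shannonCapacity_le {V : Type*} [Fintype V]
    (G : SimpleGraph V) :
    (∀ n : ℕ, 1 ≤ n →
      (indepNum (strongPow G n) : ℝ) ≤ ((cliqueHypergraph G).alphaStar) ^ n) ∧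
    (∀ Θ : ℝ,
      Filter.Tendsto (fun n : ℕ => (indepNum (strongPow G n) : ℝ) ^ (1 / (n : ℝ)))
        Filter.atTop (nhds Θ) →
      Θ ≤ (cliqueHypergraph G).alphaStar) := by
  constructor
  · intro n _
    exact ShannonAux.indepNum_le G n
  · intro Θ hΘ
    set α := (cliqueHypergraph G).alphaStar with hα
    have hα0 : 0 ≤ α := ShannonAux.alphaStar_nonneg G
    refine le_of_tendsto hΘ ?_
    filter_upwards [Filter.eventually_ge_atTop 1] with n hn
    have hnR : (0:ℝ) < (n:ℝ) := by exact_mod_cast hn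
    have h1 : (indepNum (strongPow G n) : ℝ) ≤ α ^ n := ShannonAux.indepNum_le G n
    have h2 : (indepNum (strongPow G n) : ℝ) ^ (1/(n:ℝ)) ≤ (α ^ n) ^ (1/(n:ℝ)) :=
      Real.rpow_le_rpow (by positivity) h1 (by positivity)
    calc (indepNum (strongPow G n) : ℝ) ^ (1/(n:ℝ)) ≤ (α ^ n) ^ (1/(n:ℝ)) := h2
      _ = α := by
          rw [← Real.rpow_natCast α n, ← Real.rpow_mul hα0]
          rw [mul_one_div, div_self hnR.ne', Real.rpow_one]
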